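/- Let g : ℝ^d → ℝ be convex (possibly nonsmooth) and γ > 0. For a matrix x ∈ ℝ^{m×d} with rows x^{(i)}, define the row-wise proximal operator prox_{γg}(x) whose i-th row is prox_{γg}(x^{(i)}), and let Π = I_m - (1/m)𝟙𝟙^⊤ be the projection onto the consensus complement. Then ‖prox_{γg}((1/m)𝟙𝟙^⊤ x) - (1/m)𝟙𝟙^⊤ prox_{γg}(x)‖ ≤ ‖Πx‖, where ‖·‖ is the Frobenius norm. -/

import Mathlib

open Finset

local notation "⟪" x ", " y "⟫" => @inner ℝ _ _ x y

-- directional optimality inequality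
lemma prox_ineq {E : Type*} [NormedAddCommGroup E] [InnerProductSpace ℝ E]
    (g : E → ℝ) (hg : ConvexOn ℝ Set.univ g) (γ : ℝ) (hγ : 0 < γ)
    (p : E → E)
    (hp : ∀ v u, γ * g (p v) + (1 / 2) * ‖p v - v‖ ^ 2 ≤ γ * g u + (1 / 2) * ‖u - v‖ ^ 2)
    (v w : E) : γ * g (p v) ≤ γ * g w + ⟪p v - v, w - p v⟫ := by
  have key : ∀ t : ℝ, 0 < t → t ≤ 1 →
      γ * g (p v) ≤ γ * g w + ⟪p v - v, w - p v⟫ + t / 2 * ‖w - p v‖ ^ 2 := by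
    intro t ht ht1
    have hz := hp v ((1 - t) • p v + t • w)
    have hconv := hg.2 (Set.mem_univ (p v)) (Set.mem_univ w) (by linarith : (0:ℝ) ≤ 1 - t)
      ht.le (by ring)
    simp only [smul_eq_mul] at hconv
    have hexp : ‖(1 - t) • p v + t • w - v‖ ^ 2
        = ‖p v - v‖ ^ 2 + 2 * t * ⟪p v - v, w - p v⟫ + t ^ 2 * ‖w - p v‖ ^ 2 := by
      have : (1 - t) • p v + t • w - v = (p v - v) + t • (w - p v) := by
        module
      rw [this, norm_add_sq_real, real_inner_smul_right, norm_smul, Real.norm_eq_abs,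
        abs_of_pos ht, mul_pow]
      ring
    rw [hexp] at hz
    have h2 : γ * g (p v) ≤ γ * ((1 - t) * g (p v) + t * g w)
        + t * ⟪p v - v, w - p v⟫ + t ^ 2 / 2 * ‖w - p v‖ ^ 2 := by
      calc γ * g (p v) ≤ γ * g ((1 - t) • p v + t • w) + t * ⟪p v - v, w - p v⟫
            + t ^ 2 / 2 * ‖w - p v‖ ^ 2 := by nlinarith [hz]
        _ ≤ _ := by nlinarith [hconv]
    -- divide by t
    nlinarith [h2, sq_nonneg t]
  refine le_of_forall_pos_le_add ?_
  intro ε hε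
  set C := ‖w - p v‖ ^ 2 with hC
  have hC0 : 0 ≤ C := by positivity
  have ht : 0 < min 1 (2 * ε / (C + 1)) := by positivity
  have := key _ ht (min_le_left _ _)
  have h3 : min 1 (2 * ε / (C + 1)) / 2 * C ≤ ε := by
    have h4 : min 1 (2 * ε / (C + 1)) ≤ 2 * ε / (C + 1) := min_le_right _ _
    have h5 : (0:ℝ) < C + 1 := by linarith
    calc min 1 (2 * ε / (C + 1)) / 2 * C ≤ (2 * ε / (C + 1)) / 2 * C := by
          apply mul_le_mul_of_nonneg_right _ hC0; linarith
      _ ≤ ε := by rw [div_div, div_mul_eq_mul_div, div_le_iff₀ (by linarith : (0:ℝ) < (C+1)*2)]; nlinarith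
  linarith

lemma prox_nonexp {E : Type*} [NormedAddCommGroup E] [InnerProductSpace ℝ E]
    (g : E → ℝ) (hg : ConvexOn ℝ Set.univ g) (γ : ℝ) (hγ : 0 < γ)
    (p : E → E)
    (hp : ∀ v u, γ * g (p v) + (1 / 2) * ‖p v - v‖ ^ 2 ≤ γ * g u + (1 / 2) * ‖u - v‖ ^ 2)
    (u v : E) : ‖p u - p v‖ ≤ ‖u - v‖ := by
  have h1 := prox_ineq g hg γ hγ p hp v (p u)
  have h2 := prox_ineq g hg γ hγ p hp u (p v)
  have hsum : 0 ≤ ⟪p v - v, p u - p v⟫ + ⟪p u - u, p v - p u⟫ := by linarith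
  have hkey : ‖p u - p v‖ ^ 2 ≤ ⟪u - v, p u - p v⟫ := by
    have e1 : ⟪u - v, p u - p v⟫ - ‖p u - p v‖ ^ 2
        = ⟪p v - v, p u - p v⟫ + ⟪p u - u, p v - p u⟫ := by
      rw [← real_inner_self_eq_norm_sq]
      simp only [inner_sub_left, inner_sub_right]
      rw [real_inner_comm (p v) (p u)]
      ring
    linarith
  have hcs : ⟪u - v, p u - p v⟫ ≤ ‖u - v‖ * ‖p u - p v‖ := real_inner_le_norm _ _
  rcases eq_or_lt_of_le (norm_nonneg (p u - p v)) with h | h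
  · rw [← h]; exact norm_nonneg _
  · nlinarith

theorem stmt5 (d m : ℕ) (hm : 0 < m) (g : EuclideanSpace ℝ (Fin d) → ℝ)
    (hg : ConvexOn ℝ Set.univ g) (γ : ℝ) (hγ : 0 < γ)
    (p : EuclideanSpace ℝ (Fin d) → EuclideanSpace ℝ (Fin d))
    (hp : ∀ v u, γ * g (p v) + (1 / 2) * ‖p v - v‖ ^ 2 ≤ γ * g u + (1 / 2) * ‖u - v‖ ^ 2)
    (x : Fin m → EuclideanSpace ℝ (Fin d)) :
    Real.sqrt (∑ i : Fin m,
        ‖p ((m : ℝ)⁻¹ • ∑ j : Fin m, x j) - (m : ℝ)⁻¹ • ∑ j : Fin m, p (x j)‖ ^ 2) ≤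
      Real.sqrt (∑ i : Fin m, ‖x i - (m : ℝ)⁻¹ • ∑ j : Fin m, x j‖ ^ 2) := by
  have hm' : (0:ℝ) < m := Nat.cast_pos.mpr hm
  set xb : EuclideanSpace ℝ (Fin d) := (m : ℝ)⁻¹ • ∑ j : Fin m, x j with hxb
  set a : EuclideanSpace ℝ (Fin d) := p xb - (m : ℝ)⁻¹ • ∑ j : Fin m, p (x j) with ha
  apply Real.sqrt_le_sqrt
  have ha2 : a = (m : ℝ)⁻¹ • ∑ j : Fin m, (p xb - p (x j)) := by
    rw [ha, Finset.sum_sub_distrib, smul_sub, Finset.sum_const, Finset.card_univ,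
      Fintype.card_fin, ← Nat.cast_smul_eq_nsmul ℝ, smul_smul, inv_mul_cancel₀ hm'.ne', one_smul]
  have hna : ‖a‖ ≤ (m : ℝ)⁻¹ * ∑ j : Fin m, ‖x j - xb‖ := by
    rw [ha2, norm_smul, Real.norm_eq_abs, abs_of_pos (inv_pos.mpr hm')]
    apply mul_le_mul_of_nonneg_left _ (inv_pos.mpr hm').le
    calc ‖∑ j : Fin m, (p xb - p (x j))‖ ≤ ∑ j : Fin m, ‖p xb - p (x j)‖ :=
          norm_sum_le _ _
      _ ≤ ∑ j : Fin m, ‖x j - xb‖ := by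
          apply Finset.sum_le_sum
          intro j _
          rw [norm_sub_rev (x j) xb]
          exact prox_nonexp g hg γ hγ p hp xb (x j)
  have hlhs : ∑ i : Fin m, ‖a‖ ^ 2 = m * ‖a‖ ^ 2 := by
    rw [Finset.sum_const, Finset.card_univ, Fintype.card_fin, nsmul_eq_mul]
  rw [hlhs]
  set S := ∑ j : Fin m, ‖x j - xb‖ with hS
  have hS0 : 0 ≤ S := Finset.sum_nonneg fun j _ => norm_nonneg _
  have hcs : S ^ 2 ≤ m * ∑ j : Fin m, ‖x j - xb‖ ^ 2 := by
    have := sq_sum_le_card_mul_sum_sq (s := (Finset.univ : Finset (Fin m)))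
      (f := fun j => ‖x j - xb‖)
    simpa using this
  have h2 : ‖a‖ ^ 2 ≤ ((m:ℝ)⁻¹ * S) ^ 2 := by
    apply sq_le_sq' _ hna
    nlinarith [norm_nonneg a]
  calc (m:ℝ) * ‖a‖ ^ 2 ≤ m * ((m:ℝ)⁻¹ * S) ^ 2 := by nlinarith
    _ = S ^ 2 / m := by field_simp
    _ ≤ ∑ j : Fin m, ‖x j - xb‖ ^ 2 := by
        rw [div_le_iff₀ hm']
        linarith [hcs]
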